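/- Let m ∈ ℤ, μ ∈ ℝ∖{0}, and let φ be holomorphic on the open unit disk with φ(0) ≠ 0. Then for every y₀ ∈ ℝ there exists a sequence of points wₙ = xₙ + i·y₀ with xₙ → −∞ (xₙ < 0) such that Im( e^{(m+iμ)·wₙ} · φ(e^{wₙ}) ) = 0 for every n. (Core of Lemma H: at a g-regular hyperbolic end of a CMC-1 face, whose modified secondary Gauss map is ĝ(w) = e^{(m+iμ)w}φ(e^w) on the universal cover of the punctured disk, every ray emanating from the puncture meets the singular set {Im ĝ = 0} infinitely many times.) -/

import Mathlib

open Complex Metric Filter Topology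

noncomputable section

private lemma exists_lt_theta (μ : ℝ) (hμ : μ ≠ 0) (β t M : ℝ) :
    ∃ x, x < M ∧ ∃ k : ℤ, μ * x + β = t + k * (2 * Real.pi) := by
  have h2π : (0:ℝ) < 2 * Real.pi := by positivity
  set y : ℝ := (μ * M + β - t) / (2 * Real.pi) with hy
  rcases hμ.lt_or_gt with h | h
  · refine ⟨(t + (⌊y⌋ + 1) * (2 * Real.pi) - β) / μ, ?_, ⌊y⌋ + 1, by field_simp; push_cast; ring⟩
    have hk : y < ((⌊y⌋ + 1 : ℤ) : ℝ) := by push_cast; linarith [Int.lt_floor_add_one y]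
    have hk2 : μ * M + β - t < ((⌊y⌋ + 1 : ℤ) : ℝ) * (2 * Real.pi) := by
      have := (div_lt_iff₀ h2π).mp hk
      linarith
    rw [div_lt_iff_of_neg h]
    push_cast at hk2 ⊢
    nlinarith
  · refine ⟨(t + (⌊y⌋ - 1) * (2 * Real.pi) - β) / μ, ?_, ⌊y⌋ - 1, by field_simp; push_cast; ring⟩
    have hk : ((⌊y⌋ - 1 : ℤ) : ℝ) < y := by push_cast; linarith [Int.floor_le y]
    have hk2 : ((⌊y⌋ - 1 : ℤ) : ℝ) * (2 * Real.pi) < μ * M + β - t := by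
      have := (lt_div_iff₀ h2π).mp hk
      linarith
    rw [div_lt_iff₀ h]
    push_cast at hk2 ⊢
    nlinarith

/-- Core of Lemma H: for `m ∈ ℤ`, `μ ∈ ℝ ∖ {0}` and `φ` holomorphic on the
unit disk with `φ(0) ≠ 0`, every horizontal line `{x + i y₀ : x < 0}` in the
left half-plane contains a sequence of points going to `Re = −∞` on which
`Im(e^{(m+iμ)w} φ(e^w)) = 0`; i.e. every ray emanating from the puncture
meets the singular set of a `g`-regular hyperbolic end infinitely often. -/
theorem hyperbolic_end_singular_set_meets_rays
    (m : ℤ) (μ : ℝ) (hμ : μ ≠ 0) (φ : ℂ → ℂ)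
    (hφ : DifferentiableOn ℂ φ (ball (0 : ℂ) 1)) (hφ0 : φ 0 ≠ 0) :
    ∀ y₀ : ℝ, ∃ x : ℕ → ℝ, (∀ n, x n < 0) ∧
      Tendsto x atTop atBot ∧
      ∀ n : ℕ,
        (Complex.exp (((m : ℂ) + (μ : ℂ) * Complex.I) *
            ((x n : ℂ) + (y₀ : ℂ) * Complex.I)) *
          φ (Complex.exp ((x n : ℂ) + (y₀ : ℂ) * Complex.I))).im = 0 := by
  intro y₀
  set c := φ 0 with hc
  have hcabs : 0 < ‖c‖ := by simpa using hφ0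
  set α := Complex.arg c with hα
  set ψ : ℝ → ℂ := fun x => φ (Complex.exp ((x:ℂ) + (y₀:ℂ) * I)) with hψ
  set f : ℝ → ℝ := fun x => (Complex.exp (((m:ℂ) + (μ:ℂ) * I) * ((x:ℂ) + (y₀:ℂ) * I)) *
      φ (Complex.exp ((x:ℂ) + (y₀:ℂ) * I))).im with hf
  -- key identity
  have hfx : ∀ x : ℝ, f x = Real.exp ((m:ℝ)*x - μ*y₀) *
      (Real.cos (μ*x + (m:ℝ)*y₀) * (ψ x).im + Real.sin (μ*x + (m:ℝ)*y₀) * (ψ x).re) := by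
    intro x
    have h1 : (((m:ℂ) + (μ:ℂ) * I) * ((x:ℂ) + (y₀:ℂ) * I)).re = (m:ℝ)*x - μ*y₀ := by
      simp [Complex.mul_re]
    have h2 : (((m:ℂ) + (μ:ℂ) * I) * ((x:ℂ) + (y₀:ℂ) * I)).im = μ*x + (m:ℝ)*y₀ := by
      simp [Complex.mul_im]; ring
    show (Complex.exp (((m:ℂ) + (μ:ℂ) * I) * ((x:ℂ) + (y₀:ℂ) * I)) *
      φ (Complex.exp ((x:ℂ) + (y₀:ℂ) * I))).im = _
    rw [Complex.mul_im, Complex.exp_re, Complex.exp_im, h1, h2]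
    show _ = _ * (_ * (ψ x).im + _ * (ψ x).re)
    ring
  -- limit of ψ
  have hψlim : Tendsto ψ atBot (𝓝 c) := by
    have h1 : Tendsto (fun x : ℝ => Complex.exp ((x:ℂ) + (y₀:ℂ) * I)) atBot (𝓝 0) := by
      rw [tendsto_zero_iff_norm_tendsto_zero]
      have : ∀ x : ℝ, ‖Complex.exp ((x:ℂ) + (y₀:ℂ) * I)‖ = Real.exp x := by
        intro x; rw [Complex.norm_exp]; simp
      simp only [this]
      exact Real.tendsto_exp_atBot
    have hcont : ContinuousAt φ 0 :=
      hφ.continuousOn.continuousAt (isOpen_ball.mem_nhds (by simp))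
    exact hcont.tendsto.comp h1
  have hev : ∀ᶠ x in (atBot : Filter ℝ), ‖ψ x - c‖ < ‖c‖ / 2 := by
    have h := Metric.tendsto_nhds.mp hψlim (‖c‖ / 2) (by positivity)
    simpa [Complex.dist_eq] using h
  obtain ⟨X₀, hX₀⟩ := eventually_atBot.mp hev
  -- sign estimate
  have hsign : ∀ x : ℝ, ‖ψ x - c‖ < ‖c‖ / 2 →
      ‖c‖ / 2 < Real.cos α * (ψ x).re + Real.sin α * (ψ x).im := by
    intro x hx
    have hre : (Complex.exp (-(α:ℂ)*I) * ψ x).re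
        = Real.cos α * (ψ x).re + Real.sin α * (ψ x).im := by
      simp only [Complex.mul_re, Complex.exp_re, Complex.exp_im, Complex.neg_re,
        Complex.neg_im, Complex.mul_I_re, Complex.mul_I_im, Complex.ofReal_re,
        Complex.ofReal_im, Real.cos_neg, Real.sin_neg, neg_zero, Real.exp_zero,
        Complex.I_re, Complex.I_im, mul_zero, mul_one, zero_mul, zero_sub, sub_zero, zero_add]
      ring
    have hc1 : Complex.exp (-(α:ℂ)*I) * c = ((‖c‖ : ℝ) : ℂ) := by
      have hcc : ((‖c‖ : ℝ) : ℂ) * Complex.exp ((α:ℂ)*I) = c :=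
        Complex.norm_mul_exp_arg_mul_I c
      rw [← hcc, ← mul_assoc, mul_comm (Complex.exp _), mul_assoc, ← Complex.exp_add]
      simp
    have hsplit : Complex.exp (-(α:ℂ)*I) * ψ x
        = ((‖c‖ : ℝ) : ℂ) + Complex.exp (-(α:ℂ)*I) * (ψ x - c) := by
      rw [mul_sub, hc1]; ring
    have habs : ‖Complex.exp (-(α:ℂ)*I) * (ψ x - c)‖ = ‖ψ x - c‖ := by
      rw [norm_mul, Complex.norm_exp]
      simp
    have hrebound : -(‖c‖ / 2) < (Complex.exp (-(α:ℂ)*I) * (ψ x - c)).re := by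
      have h1 : |(Complex.exp (-(α:ℂ)*I) * (ψ x - c)).re|
          ≤ ‖Complex.exp (-(α:ℂ)*I) * (ψ x - c)‖ := Complex.abs_re_le_norm _
      rw [habs] at h1
      have := abs_lt.mp (lt_of_le_of_lt h1 hx)
      linarith [this.1]
    have : (Complex.exp (-(α:ℂ)*I) * ψ x).re
        = ‖c‖ + (Complex.exp (-(α:ℂ)*I) * (ψ x - c)).re := by
      rw [hsplit]; simp
    rw [← hre, this]
    linarith
  -- main existence of zeros arbitrarily far left
  have hmain : ∀ R : ℝ, ∃ x, x < R ∧ x < 0 ∧ f x = 0 := by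
    intro R
    set M := min R (min X₀ 0) with hM
    obtain ⟨b, hbM, kb, hkb⟩ := exists_lt_theta μ hμ ((m:ℝ)*y₀) (-(Real.pi/2) - α) M
    obtain ⟨a, hab, ka, hka⟩ := exists_lt_theta μ hμ ((m:ℝ)*y₀) (Real.pi/2 - α) b
    have hbX : b ≤ X₀ := le_of_lt (lt_of_lt_of_le hbM ((min_le_right _ _).trans (min_le_left _ _)))
    have haX : a ≤ X₀ := le_of_lt (hab.trans_le hbX)
    have hbneg : b < 0 := lt_of_lt_of_le hbM ((min_le_right _ _).trans (min_le_right _ _))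
    have haψ := hX₀ a haX
    have hbψ := hX₀ b hbX
    have hfa : 0 < f a := by
      rw [hfx a, hka, Real.cos_add_int_mul_two_pi, Real.sin_add_int_mul_two_pi,
        Real.cos_pi_div_two_sub, Real.sin_pi_div_two_sub]
      have := hsign a haψ
      have hE := Real.exp_pos ((m:ℝ)*a - μ*y₀)
      nlinarith
    have hfb : f b < 0 := by
      rw [hfx b, hkb, Real.cos_add_int_mul_two_pi, Real.sin_add_int_mul_two_pi]
      have e1 : -(Real.pi/2) - α = -(Real.pi/2 + α) := by ring
      rw [e1, Real.cos_neg, Real.sin_neg, Real.cos_add, Real.sin_add,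
        Real.cos_pi_div_two, Real.sin_pi_div_two]
      have := hsign b hbψ
      have hE := Real.exp_pos ((m:ℝ)*b - μ*y₀)
      nlinarith
    have hIcc : Set.Icc a b ⊆ Set.Iio (0:ℝ) := fun z hz => lt_of_le_of_lt hz.2 hbneg
    have h1 : Continuous fun x : ℝ =>
        Complex.exp (((m:ℂ)+(μ:ℂ)*I) * ((x:ℂ) + (y₀:ℂ)*I)) := by
      apply Complex.continuous_exp.comp
      continuity
    have h2 : ContinuousOn ψ (Set.Iio (0:ℝ)) := by
      apply hφ.continuousOn.comp
      · exact (Complex.continuous_exp.comp (by continuity)).continuousOn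
      · intro x hx
        simp only [Set.mem_Iio] at hx
        rw [mem_ball_zero_iff, Complex.norm_exp]
        simpa using Real.exp_lt_one_iff.mpr hx
    have hcont : ContinuousOn f (Set.Icc a b) :=
      Complex.continuous_im.comp_continuousOn
        (h1.continuousOn.mul (h2.mono hIcc))
    have h0 : (0:ℝ) ∈ Set.Icc (f b) (f a) := ⟨hfb.le, hfa.le⟩
    obtain ⟨x, hxmem, hx0⟩ := intermediate_value_Icc' hab.le hcont h0
    refine ⟨x, ?_, ?_, hx0⟩
    · exact lt_of_le_of_lt hxmem.2 (lt_of_lt_of_le hbM (min_le_left _ _))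
    · exact lt_of_le_of_lt hxmem.2 hbneg
  choose g hg1 hg2 hg3 using fun n : ℕ => hmain (-((n:ℝ)+1))
  refine ⟨g, hg2, ?_, fun n => hg3 n⟩
  rw [tendsto_atBot]
  intro b
  filter_upwards [eventually_ge_atTop ⌈-b⌉₊] with n hn
  have h1 := hg1 n
  have h2 : (-b : ℝ) ≤ (⌈-b⌉₊ : ℕ) := Nat.le_ceil _
  have h3 : ((⌈-b⌉₊ : ℕ) : ℝ) ≤ (n : ℝ) := Nat.cast_le.mpr hn
  linarith
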